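/- Let (G_i : (X_i, S) ⇸ (Y_i, R))_{i∈I} be a family of open games with common contravariant boundary sets S and R. Define the open game ∏_{i∈I} G_i : (∐_i X_i, S) ⇸ (∐_i Y_i, R) by: Σ(∏_i G_i) = ∏_i Σ(G_i); (∏_i G_i)(σ) is the lens with view ι_j(x) ↦ ι_j(v_{G_j(σ_j)}(x)) and update (ι_j(x), r) ↦ u_{G_j(σ_j)}(x, r); and (σ,σ') ∈ B_{∏_i G_i}(ι_j(h), k) iff (σ_j, σ'_j) ∈ B_{G_j}(h, k ∘ ι_j). Define projections π_j : ∏_i G_i → G_j with s(π_j) = (ι_j, id_S), t(π_j) = (ι_j, id_R) (lenses with view the coproduct inclusion and update the second projection) and Σ(π_j) the product projection. Then each π_j is a morphism of open games, and (∏_i G_i, (π_j)_{j∈I}) is a categorical product of the family (G_i) in the category Game_v: for every open game H and family of morphisms α_i : H → G_i there is a unique morphism α : H → ∏_i G_i with π_i ∘ α = α_i for all i. -/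
import Mathlib


/-- A lens between 'disets' `(X, S)` and `(Y, R)`: a view function `X → Y` and
an update function `X × R → S`. -/
structure Lens (X S Y R : Type) where
  v : X → Y
  u : X → R → S

namespace Lens

/-- The identity lens on the diset `(X, S)`. -/
def id (X S : Type) : Lens X S X S := ⟨fun x => x, fun _ s => s⟩

/-- Composition of lenses: `m.comp l` is "first `l`, then `m`". -/
def comp {X S Y R Z Q : Type} (m : Lens Y R Z Q) (l : Lens X S Y R) : Lens X S Z Q :=
  ⟨fun x => m.v (l.v x), fun x q => l.u x (m.u (l.v x) q)⟩

theorem comp_assoc {X S Y R Z Q W T : Type} (c : Lens Z Q W T) (b : Lens Y R Z Q)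
    (a : Lens X S Y R) : (c.comp b).comp a = c.comp (b.comp a) := rfl

/-- The action of the continuation functor `K` on a lens. -/
def K {X S Y R : Type} (l : Lens X S Y R) (k : Y → R) : X → S :=
  fun x => l.u x (k (l.v x))

theorem K_comp {X S Y R Z Q : Type} (m : Lens Y R Z Q) (l : Lens X S Y R) (k : Z → Q) :
    (m.comp l).K k = l.K (m.K k) := rfl

/-- The tensor (monoidal product) of lenses. -/
def tensor {X S Y R X' S' Y' R' : Type} (l : Lens X S Y R) (l' : Lens X' S' Y' R') :
    Lens (X × X') (S × S') (Y × Y') (R × R') :=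
  ⟨fun p => (l.v p.1, l'.v p.2), fun p r => (l.u p.1 r.1, l'.u p.2 r.2)⟩

end Lens

/-- An open game `G : (X,S) ⇸ (Y,R)`: a set of strategy profiles, a lens for each
strategy profile, and a best-response relation for each context `(h, k)`. -/
structure OpenGame (X S Y R : Type) where
  Strat : Type
  play : Strat → Lens X S Y R
  B : X → (Y → R) → Strat → Strat → Prop

namespace OpenGame

/-- A state of an open game over a continuation `k`: a strategy profile `σ` with
`(σ,σ) ∈ B(h,k)` for every history `h`. -/
def IsState {X S Y R : Type} (G : OpenGame X S Y R) (σ : G.Strat) (k : Y → R) : Prop :=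
  ∀ h : X, G.B h k σ σ

/-- Sequential composition `H ⊙ G` of open games. -/
def seq {X S Y R Z Q : Type} (G : OpenGame X S Y R) (H : OpenGame Y R Z Q) :
    OpenGame X S Z Q where
  Strat := G.Strat × H.Strat
  play := fun p => (H.play p.2).comp (G.play p.1)
  B := fun h k p p' =>
    G.B h ((H.play p.2).K k) p.1 p'.1 ∧ H.B ((G.play p.1).v h) k p.2 p'.2

/-- Tensor (simultaneous play) `G₁ ⊗ G₂` of open games. -/
def tensor {X₁ S₁ Y₁ R₁ X₂ S₂ Y₂ R₂ : Type}
    (G₁ : OpenGame X₁ S₁ Y₁ R₁) (G₂ : OpenGame X₂ S₂ Y₂ R₂) :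
    OpenGame (X₁ × X₂) (S₁ × S₂) (Y₁ × Y₂) (R₁ × R₂) where
  Strat := G₁.Strat × G₂.Strat
  play := fun p => (G₁.play p.1).tensor (G₂.play p.2)
  B := fun h k p p' =>
    G₁.B h.1 (fun y => (k (y, (G₂.play p.2).v h.2)).1) p.1 p'.1 ∧
    G₂.B h.2 (fun y' => (k ((G₁.play p.1).v h.1, y')).2) p.2 p'.2

end OpenGame

/-- A (contravariant lens) morphism of open games `α : G → G'`: lenses
`s(α) : Φ' → Φ` and `t(α) : Ψ' → Ψ` and a map on strategy profiles, such that plays are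
intertwined and best responses are preserved. -/
structure OGMor {X S Y R X' S' Y' R' : Type}
    (G : OpenGame X S Y R) (G' : OpenGame X' S' Y' R') where
  s : Lens X' S' X S
  t : Lens Y' R' Y R
  f : G.Strat → G'.Strat
  comm : ∀ σ, (G.play σ).comp s = t.comp (G'.play (f σ))
  best : ∀ h k σ σ', G.B (s.v h) k σ σ' → G'.B h (t.K k) (f σ) (f σ')

/-- Vertical composition of morphisms of open games. -/
def OGMor.vcomp {X S Y R X' S' Y' R' X'' S'' Y'' R'' : Type}
    {G : OpenGame X S Y R} {G' : OpenGame X' S' Y' R'} {G'' : OpenGame X'' S'' Y'' R''}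
    (β : OGMor G' G'') (α : OGMor G G') : OGMor G G'' where
  s := α.s.comp β.s
  t := α.t.comp β.t
  f := β.f ∘ α.f
  comm := by
    intro σ
    show _ = (α.t.comp β.t).comp (G''.play (β.f (α.f σ)))
    rw [← Lens.comp_assoc, α.comm, Lens.comp_assoc, β.comm, ← Lens.comp_assoc]
  best := by
    intro h k σ σ' hB
    exact β.best h (α.t.K k) _ _ (α.best (β.s.v h) k σ σ' hB)

/-- The product of a family of open games `G i : (X i, S) ⇸ (Y i, R)` with common
contravariant boundary: the open game `(∐ i, X i, S) ⇸ (∐ i, Y i, R)` with strategy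
profiles `∏ i, Σ(G i)`, plays acting componentwise on the coproducts, and best response at
a history `ι_j h` given by the best response of `G j`. -/
def prodGame {I : Type} {X Y : I → Type} {S R : Type}
    (G : ∀ i : I, OpenGame (X i) S (Y i) R) :
    OpenGame (Σ i : I, X i) S (Σ i : I, Y i) R where
  Strat := ∀ i : I, (G i).Strat
  play := fun σ =>
    ⟨fun x => ⟨x.1, ((G x.1).play (σ x.1)).v x.2⟩,
     fun x r => ((G x.1).play (σ x.1)).u x.2 r⟩
  B := fun h k σ σ' => (G h.1).B h.2 (fun y => k ⟨h.1, y⟩) (σ h.1) (σ' h.1)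

/-- The projection morphism `π_j : ∏ i, G i → G j`, whose `s`- and `t`-components are the
lenses given by the coproduct inclusion and second projection, and whose `Σ`-component is
the product projection. -/
def prodGameProj {I : Type} {X Y : I → Type} {S R : Type}
    (G : ∀ i : I, OpenGame (X i) S (Y i) R) (j : I) :
    OGMor (prodGame G) (G j) where
  s := ⟨fun x => ⟨j, x⟩, fun _ s => s⟩
  t := ⟨fun y => ⟨j, y⟩, fun _ r => r⟩
  f := fun σ => σ j
  comm := fun _ => rfl
  best := fun _ _ _ _ hB => hB

theorem Lens.ext' {X S Y R : Type} {l m : Lens X S Y R}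
    (hv : l.v = m.v) (hu : l.u = m.u) : l = m := by
  cases l; cases m; cases hv; cases hu; rfl

theorem OGMor.ext' {X S Y R X' S' Y' R' : Type}
    {G : OpenGame X S Y R} {G' : OpenGame X' S' Y' R'} {a b : OGMor G G'}
    (hs : a.s = b.s) (ht : a.t = b.t) (hf : a.f = b.f) : a = b := by
  cases a; cases b; cases hs; cases ht; cases hf; rfl

/-- `(∏ i, G i, (π_j)_j)` is a categorical product of the family `(G i)` in the category
of open games and morphisms: each `π_j` is a morphism of open games (witnessed by
`prodGameProj`), and for every open game `H` and family of morphisms `α i : H → G i` there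
is a unique morphism `β : H → ∏ i, G i` with `π_i ∘ β = α i` for all `i`. -/
theorem prodGame_is_product {I : Type} {X Y : I → Type} {S R : Type}
    (G : ∀ i : I, OpenGame (X i) S (Y i) R) :
    ∀ (W T W' T' : Type) (H : OpenGame W T W' T') (α : ∀ i : I, OGMor H (G i)),
      ∃! β : OGMor H (prodGame G), ∀ i : I, (prodGameProj G i).vcomp β = α i := by
  intro W T W' T' H α
  refine ⟨{ s := ⟨fun x => (α x.1).s.v x.2, fun x t => (α x.1).s.u x.2 t⟩,
            t := ⟨fun y => (α y.1).t.v y.2, fun y r => (α y.1).t.u y.2 r⟩,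
            f := fun σ i => (α i).f σ,
            comm := ?_, best := ?_ }, ?_, ?_⟩
  · intro σ
    refine Lens.ext' ?_ ?_
    · funext x
      exact congrFun (congrArg Lens.v ((α x.1).comm σ)) x.2
    · funext x r
      exact congrFun (congrFun (congrArg Lens.u ((α x.1).comm σ)) x.2) r
  · intro h k σ σ' hB
    exact (α h.1).best h.2 k σ σ' hB
  · intro i
    refine OGMor.ext' (Lens.ext' rfl rfl) (Lens.ext' rfl rfl) rfl
  · intro β' hβ'
    refine OGMor.ext' ?_ ?_ ?_
    · refine Lens.ext' ?_ ?_
      · funext x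
        exact congrFun (congrArg Lens.v (congrArg OGMor.s (hβ' x.1))) x.2
      · funext x t
        exact congrFun (congrFun (congrArg Lens.u (congrArg OGMor.s (hβ' x.1))) x.2) t
    · refine Lens.ext' ?_ ?_
      · funext y
        exact congrFun (congrArg Lens.v (congrArg OGMor.t (hβ' y.1))) y.2
      · funext y r
        exact congrFun (congrFun (congrArg Lens.u (congrArg OGMor.t (hβ' y.1))) y.2) r
    · funext σ
      funext i
      exact congrFun (congrArg OGMor.f (hβ' i)) σ
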